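/- arXiv:1809.03533 — 2 statements merged into one kernel-verified Lean document; each statement's English description precedes it below -/
import Mathlib

section
/- Let n = 2m, and let μ₁ ≥ μ₂ ≥ ⋯ ≥ μ_m ≥ 0 be integers. Set λ = (μ₁,…,μ_m,-μ_m,…,-μ₁). Then the Weyl dimension formula for GL(2m) evaluated at λ equals the square of the D_m Weyl dimension formula evaluated at (μ₁+1/2,…,μ_m+1/2) divided by 2^{2(m-1)}, times the product ∏_{i=1}^m (2λᵢ + 2m - 2i + 1)/(2m - 2i + 1). Equivalently: dim π(λ) = Sig² · ∏_{i=1}^m (2μᵢ + n - 2i + 1)/(n - 2i + 1), where Sig = dim σ(μ)/2^{m-1} and σ(μ) is the Spin(2m)-irreducible of highest weight μ + (1/2,…,1/2). -/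
open Finset

namespace Stmt9Aux

def P {M : Type*} [CommMonoid M] (n : ℕ) (f : ℕ → ℕ → M) : M :=
  ∏ i ∈ range n, ∏ j ∈ Ico (i+1) n, f i j

section
variable {M : Type*} [CommMonoid M]

theorem P_congr {n : ℕ} {f g : ℕ → ℕ → M}
    (h : ∀ i j, i < j → j < n → f i j = g i j) : P n f = P n g := by
  unfold P
  refine prod_congr rfl fun i hi => prod_congr rfl fun j hj => ?_
  rw [mem_Ico] at hj
  exact h i j hj.1 hj.2

theorem P_succ (n : ℕ) (f : ℕ → ℕ → M) :
    P (n+1) f = P n f * ∏ i ∈ range n, f i n := by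
  unfold P
  rw [prod_range_succ]
  have h1 : ∏ j ∈ Ico (n+1) (n+1), f n j = 1 := by simp
  rw [h1, mul_one, ← prod_mul_distrib]
  refine prod_congr rfl fun i hi => ?_
  rw [mem_range] at hi
  rw [prod_Ico_succ_top (by omega)]

theorem P_split (m : ℕ) (f : ℕ → ℕ → M) :
    P (m+m) f = (P m f * ∏ i ∈ range m, ∏ j ∈ range m, f i (m+j)) *
      P m (fun i j => f (m+i) (m+j)) := by
  unfold P
  rw [prod_range_add]
  congr 1
  · rw [← prod_mul_distrib]
    refine prod_congr rfl fun i hi => ?_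
    rw [mem_range] at hi
    rw [← prod_Ico_consecutive _ (by omega : i+1 ≤ m) (by omega : m ≤ m+m)]
    congr 1
    rw [prod_Ico_eq_prod_range]
    have h3 : m + m - m = m := by omega
    rw [h3]
  · refine prod_congr rfl fun i hi => ?_
    rw [mem_range] at hi
    rw [prod_Ico_eq_prod_range, prod_Ico_eq_prod_range]
    have h2 : m + m - (m + i + 1) = m - (i+1) := by omega
    rw [h2]
    refine prod_congr rfl fun j hj => ?_
    congr 1
    omega

theorem P_swap (n : ℕ) (f : ℕ → ℕ → M) :
    (∏ i ∈ range n, ∏ j ∈ range i, f i j) = P n (fun i j => f j i) := by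
  unfold P
  rw [prod_sigma', prod_sigma']
  refine prod_nbij' (fun x => ⟨x.2, x.1⟩) (fun x => ⟨x.2, x.1⟩) ?_ ?_ ?_ ?_ ?_
  · rintro ⟨x, y⟩ ha
    simp only [mem_sigma, mem_range, mem_Ico] at ha ⊢
    omega
  · rintro ⟨x, y⟩ ha
    simp only [mem_sigma, mem_range, mem_Ico] at ha ⊢
    omega
  · rintro ⟨x, y⟩ ha
    rfl
  · rintro ⟨x, y⟩ ha
    rfl
  · rintro ⟨x, y⟩ ha
    rfl

theorem P_reflect (n : ℕ) (f : ℕ → ℕ → M) :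
    P n f = P n (fun i j => f (n-1-j) (n-1-i)) := by
  unfold P
  rw [prod_sigma', prod_sigma']
  refine prod_nbij' (fun x => ⟨n-1-x.2, n-1-x.1⟩) (fun x => ⟨n-1-x.2, n-1-x.1⟩) ?_ ?_ ?_ ?_ ?_
  · rintro ⟨x, y⟩ ha
    simp only [mem_sigma, mem_range, mem_Ico] at ha ⊢
    omega
  · rintro ⟨x, y⟩ ha
    simp only [mem_sigma, mem_range, mem_Ico] at ha ⊢
    omega
  · rintro ⟨x, y⟩ ha
    simp only [mem_sigma, mem_range, mem_Ico] at ha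
    have h1 : n-1-(n-1-x) = x := by omega
    have h2 : n-1-(n-1-y) = y := by omega
    show (⟨n-1-(n-1-x), n-1-(n-1-y)⟩ : Σ _ : ℕ, ℕ) = ⟨x, y⟩
    rw [h1, h2]
  · rintro ⟨x, y⟩ ha
    simp only [mem_sigma, mem_range, mem_Ico] at ha
    have h1 : n-1-(n-1-x) = x := by omega
    have h2 : n-1-(n-1-y) = y := by omega
    show (⟨n-1-(n-1-x), n-1-(n-1-y)⟩ : Σ _ : ℕ, ℕ) = ⟨x, y⟩
    rw [h1, h2]
  · rintro ⟨x, y⟩ ha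
    simp only [mem_sigma, mem_range, mem_Ico] at ha
    have h1 : n-1-(n-1-x) = x := by omega
    have h2 : n-1-(n-1-y) = y := by omega
    simp only [h1, h2]

theorem P_square (n : ℕ) (g : ℕ → ℕ → M) (hsym : ∀ i j, g i j = g j i) :
    (∏ i ∈ range n, ∏ j ∈ range n, g i j) = (P n g)^2 * ∏ i ∈ range n, g i i := by
  have key : ∀ i ∈ range n,
      (∏ j ∈ range n, g i j) = (∏ j ∈ range i, g i j) * g i i * ∏ j ∈ Ico (i+1) n, g i j := by
    intro i hi
    rw [mem_range] at hi
    have e1 : (∏ j ∈ Ico 0 (i+1), g i j) * ∏ j ∈ Ico (i+1) n, g i j = ∏ j ∈ Ico 0 n, g i j :=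
      prod_Ico_consecutive _ (Nat.zero_le _) (by omega)
    simp only [← range_eq_Ico] at e1
    rw [← e1, prod_range_succ]
  rw [prod_congr rfl key]
  rw [prod_mul_distrib, prod_mul_distrib]
  have h1 : (∏ i ∈ range n, ∏ j ∈ range i, g i j) = P n g := by
    rw [P_swap]
    exact P_congr fun i j _ _ => hsym j i
  rw [h1]
  have h2 : (∏ i ∈ range n, ∏ j ∈ Ico (i+1) n, g i j) = P n g := rfl
  rw [h2, pow_two]
  exact mul_right_comm _ _ _

theorem fin_double (n : ℕ) (q : ℕ → ℕ → M) :
    (∏ i : Fin n, ∏ j ∈ Finset.Ioi i, q i.val j.val) = P n q := by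
  have h : ∀ i : Fin n, (∏ j ∈ Finset.Ioi i, q i.val j.val)
      = ∏ j ∈ Ico (i.val+1) n, q i.val j := by
    intro i
    refine prod_bij' (fun j _ => (j : ℕ)) (fun k hk => ⟨k, (mem_Ico.mp hk).2⟩) ?_ ?_ ?_ ?_ ?_
    · intro a ha
      rw [mem_Ioi] at ha
      rw [mem_Ico]
      exact ⟨ha, a.isLt⟩
    · intro a ha
      rw [mem_Ioi]
      exact (mem_Ico.mp ha).1
    · intro a ha
      rfl
    · intro a ha
      rfl
    · intro a ha
      rfl
  calc (∏ i : Fin n, ∏ j ∈ Finset.Ioi i, q i.val j.val)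
      = ∏ i : Fin n, (fun k => ∏ j ∈ Ico (k+1) n, q k j) i.val :=
        Finset.prod_congr rfl fun i _ => h i
    _ = ∏ i ∈ range n, ∏ j ∈ Ico (i+1) n, q i j :=
        Fin.prod_univ_eq_prod_range (fun k => ∏ j ∈ Ico (k+1) n, q k j) n
    _ = P n q := rfl

end

theorem P_cast (n : ℕ) (f : ℕ → ℕ → ℕ) :
    ((P n f : ℕ) : ℚ) = P n (fun i j => ((f i j : ℕ) : ℚ)) := by
  unfold P
  push_cast
  rfl

/-! ### Numeric lemma -/

theorem prodrange_sub_eq_factorial (n : ℕ) :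
    (∏ i ∈ range n, (n - i)) = n.factorial := by
  calc (∏ i ∈ range n, (n - i))
      = ∏ j ∈ range n, (n - (n - 1 - j)) := (prod_range_reflect (fun i => n - i) n).symm
    _ = ∏ j ∈ range n, (j + 1) := by
        refine prod_congr rfl fun j hj => ?_
        rw [mem_range] at hj
        omega
    _ = n.factorial := prod_range_add_one_eq_factorial n

theorem sfpair_succ (n : ℕ) :
    P (n+1) (fun i j => j - i) = P n (fun i j => j - i) * n.factorial := by
  rw [P_succ]
  congr 1
  exact prodrange_sub_eq_factorial n

theorem key_fact (m : ℕ) (hm : 1 ≤ m) :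
    m.factorial * ∏ i ∈ range m, (i + m) = m * (2*m-1).factorial := by
  obtain ⟨k, rfl⟩ : ∃ k, m = k+1 := ⟨m-1, by omega⟩
  have h1 : (∏ i ∈ range (k+1), (i + (k+1))) = ∏ j ∈ Ico (k+1) (2*k+1+1), j := by
    rw [prod_Ico_eq_prod_range]
    have e : 2*k+1+1 - (k+1) = k+1 := by omega
    rw [e]
    exact prod_congr rfl fun j _ => by omega
  have h2 : (∏ j ∈ Ico 1 (k+1), j) * ∏ j ∈ Ico (k+1) (2*k+1+1), j = ∏ j ∈ Ico 1 (2*k+1+1), j :=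
    prod_Ico_consecutive _ (by omega) (by omega)
  have h3 : (∏ j ∈ Ico 1 (k+1), j) = k.factorial := prod_Ico_id_eq_factorial k
  have h4 : (∏ j ∈ Ico 1 (2*k+1+1), j) = (2*k+1).factorial := prod_Ico_id_eq_factorial (2*k+1)
  have h5 : 2*(k+1)-1 = 2*k+1 := by omega
  rw [h5, h1, Nat.factorial_succ, mul_assoc, ← h3, h2, h4]

theorem lemB_nat (m : ℕ) (hm : 1 ≤ m) :
    P (m+m) (fun i j => j - i)
      = (P m (fun i j => (j - i) * (i + j)))^2 * 4^(m-1) * ∏ i ∈ range m, (2*i+1) := by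
  induction m, hm using Nat.le_induction with
  | base => decide
  | succ m hm ih =>
    have e1 : m+1+(m+1) = (m+m+1)+1 := by omega
    rw [e1, sfpair_succ, sfpair_succ, ih]
    have e2 : P (m+1) (fun i j => (j - i) * (i + j))
        = P m (fun i j => (j - i) * (i + j)) * ∏ i ∈ range m, ((m - i) * (i + m)) := by
      rw [P_succ]
    rw [e2, prod_range_succ]
    simp only [Nat.add_sub_cancel]
    have e3 : (4:ℕ)^m = 4^(m-1)*4 := by
      rw [← pow_succ]
      congr 1
      omega
    rw [e3]
    have e4 : (∏ i ∈ range m, ((m - i) * (i + m))) = m.factorial * ∏ i ∈ range m, (i + m) := by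
      rw [prod_mul_distrib, prodrange_sub_eq_factorial]
    rw [e4, key_fact m hm]
    have hf1 : (m+m).factorial = (m+m) * (2*m-1).factorial := by
      rw [show m+m = (2*m-1)+1 by omega, Nat.factorial_succ]
    have hf2 : (m+m+1).factorial = (m+m+1) * ((m+m) * (2*m-1).factorial) := by
      rw [Nat.factorial_succ, hf1]
    rw [hf2, hf1]
    ring

/-! ### Specific functions -/

def mu' (m : ℕ) (μ : Fin m → ℕ) : ℕ → ℕ := fun i => if h : i < m then μ ⟨i, h⟩ else 0

def Lfun (m : ℕ) (μ : Fin m → ℕ) : ℕ → ℚ := fun i =>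
  if i < m then (mu' m μ i : ℚ) else -(mu' m μ (2*m-1-i) : ℚ)

def Bfun (m : ℕ) (μ : Fin m → ℕ) : ℕ → ℚ := fun i =>
  2*(mu' m μ i : ℚ) + 2*(m:ℚ) - 2*(i:ℚ) - 1

def Gm (m : ℕ) (μ : Fin m → ℕ) : ℕ → ℕ → ℚ := fun a b => (Bfun m μ a - Bfun m μ b)/2

def Gp (m : ℕ) (μ : Fin m → ℕ) : ℕ → ℕ → ℚ := fun a b => (Bfun m μ a + Bfun m μ b)/2

theorem lemA (m : ℕ) (μ : Fin m → ℕ) :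
    P (m+m) (fun a b => Lfun m μ a - Lfun m μ b + (b:ℚ) - (a:ℚ))
      = (P m (Gm m μ) * P m (Gp m μ))^2 * ∏ i ∈ range m, Bfun m μ i := by
  rw [P_split]
  have p1 : P m (fun a b => Lfun m μ a - Lfun m μ b + (b:ℚ) - (a:ℚ)) = P m (Gm m μ) := by
    refine P_congr fun i j hij hjm => ?_
    show Lfun m μ i - Lfun m μ j + (j:ℚ) - (i:ℚ) = (Bfun m μ i - Bfun m μ j)/2
    simp only [Lfun, Bfun]
    rw [if_pos (show i < m by omega), if_pos hjm]
    ring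
  have p3 : P m (fun i j => (fun a b => Lfun m μ a - Lfun m μ b + (b:ℚ) - (a:ℚ)) (m+i) (m+j))
      = P m (Gm m μ) := by
    have step : P m (fun i j => (fun a b => Lfun m μ a - Lfun m μ b + (b:ℚ) - (a:ℚ)) (m+i) (m+j))
        = P m (fun i j => Gm m μ (m-1-j) (m-1-i)) := by
      refine P_congr fun i j hij hjm => ?_
      show Lfun m μ (m+i) - Lfun m μ (m+j) + ((m+j:ℕ):ℚ) - ((m+i:ℕ):ℚ)
          = (Bfun m μ (m-1-j) - Bfun m μ (m-1-i))/2
      simp only [Lfun, Bfun]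
      rw [if_neg (show ¬ m+i < m by omega), if_neg (show ¬ m+j < m by omega)]
      have e1 : 2*m-1-(m+i) = m-1-i := by omega
      have e2 : 2*m-1-(m+j) = m-1-j := by omega
      rw [e1, e2]
      have c1 : ((m-1-i:ℕ):ℚ) = (m:ℚ)-1-(i:ℚ) := by
        rw [Nat.cast_sub (show i ≤ m-1 by omega), Nat.cast_sub (show 1 ≤ m by omega),
          Nat.cast_one]
      have c2 : ((m-1-j:ℕ):ℚ) = (m:ℚ)-1-(j:ℚ) := by
        rw [Nat.cast_sub (show j ≤ m-1 by omega), Nat.cast_sub (show 1 ≤ m by omega),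
          Nat.cast_one]
      rw [c1, c2]
      push_cast
      ring
    rw [step]
    exact (P_reflect m (Gm m μ)).symm
  have p2 : (∏ i ∈ range m, ∏ j ∈ range m,
        (fun a b => Lfun m μ a - Lfun m μ b + (b:ℚ) - (a:ℚ)) i (m+j))
      = (P m (Gp m μ))^2 * ∏ i ∈ range m, Bfun m μ i := by
    have e0 : ∀ i ∈ range m, (∏ j ∈ range m,
          (fun a b => Lfun m μ a - Lfun m μ b + (b:ℚ) - (a:ℚ)) i (m+j))
        = ∏ j ∈ range m, Gp m μ i j := by
      intro i hi
      rw [mem_range] at hi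
      calc (∏ j ∈ range m, (fun a b => Lfun m μ a - Lfun m μ b + (b:ℚ) - (a:ℚ)) i (m+j))
          = ∏ j ∈ range m, Gp m μ i (m-1-j) := by
            refine prod_congr rfl fun j hj => ?_
            rw [mem_range] at hj
            show Lfun m μ i - Lfun m μ (m+j) + ((m+j:ℕ):ℚ) - (i:ℚ)
                = (Bfun m μ i + Bfun m μ (m-1-j))/2
            simp only [Lfun, Bfun]
            rw [if_pos hi, if_neg (show ¬ m+j < m by omega)]
            have e2 : 2*m-1-(m+j) = m-1-j := by omega
            rw [e2]
            have c2 : ((m-1-j:ℕ):ℚ) = (m:ℚ)-1-(j:ℚ) := by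
              rw [Nat.cast_sub (show j ≤ m-1 by omega), Nat.cast_sub (show 1 ≤ m by omega),
                Nat.cast_one]
            rw [c2]
            push_cast
            ring
        _ = ∏ j ∈ range m, Gp m μ i j := prod_range_reflect (fun j => Gp m μ i j) m
    rw [prod_congr rfl e0]
    rw [P_square m (Gp m μ) (fun i j => by simp only [Gp]; ring)]
    congr 1
    refine prod_congr rfl fun i _ => ?_
    show (Bfun m μ i + Bfun m μ i)/2 = Bfun m μ i
    ring
  rw [p1, p2, p3]
  ring

end Stmt9Aux

open Stmt9Aux

/-- For `n = 2m` and `μ₁ ≥ ⋯ ≥ μ_m ≥ 0`, with `λ = (μ₁,…,μ_m,-μ_m,…,-μ₁)`, the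
Weyl dimension formula for `GL(2m)` at `λ` satisfies
`dim π(λ) · ∏_{i=1}^m (2m-2i+1) = (dim σ(μ+½)/2^{m-1})² · ∏_{i=1}^m (2μᵢ+2m-2i+1)`,
where `dim σ(ν)` is the `D_m` Weyl dimension formula (all products written 0-based). -/
theorem stmt9 (m : ℕ) (hm : 0 < m) (μ : Fin m → ℕ)
    (hdec : ∀ i j : Fin m, i ≤ j → μ j ≤ μ i)
    (lam : Fin (2 * m) → ℤ)
    (hlam₁ : ∀ (i : Fin (2 * m)) (h : (i : ℕ) < m), lam i = μ ⟨i, h⟩)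
    (hlam₂ : ∀ (i : Fin (2 * m)) (h : 2 * m - 1 - (i : ℕ) < m),
      m ≤ (i : ℕ) → lam i = -(μ ⟨2 * m - 1 - (i : ℕ), h⟩ : ℤ))
    (ν : Fin m → ℚ) (hν : ∀ i, ν i = (μ i : ℚ) + 1 / 2) :
    (∏ i : Fin (2 * m), ∏ j ∈ Finset.Ioi i,
        ((lam i : ℚ) - (lam j : ℚ) + (j : ℚ) - (i : ℚ)) / ((j : ℚ) - (i : ℚ))) *
      (∏ i : Fin m, (2 * m - 2 * (i : ℚ) - 1)) =
    ((∏ i : Fin m, ∏ j ∈ Finset.Ioi i,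
        ((ν i - ν j + (j : ℚ) - (i : ℚ)) * (ν i + ν j + 2 * m - (i : ℚ) - (j : ℚ) - 2)) /
          (((j : ℚ) - (i : ℚ)) * (2 * m - (i : ℚ) - (j : ℚ) - 2))) / 2 ^ (m - 1)) ^ 2 *
      (∏ i : Fin m, (2 * (μ i : ℚ) + 2 * m - 2 * (i : ℚ) - 1)) := by
  have hm1 : 1 ≤ m := hm
  have hLam : ∀ i : Fin (2*m), ((lam i : ℤ) : ℚ) = Lfun m μ i.val := by
    intro i
    by_cases h : (i : ℕ) < m
    · rw [hlam₁ i h]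
      simp only [Lfun, mu', if_pos h, dif_pos h]
      push_cast
      rfl
    · have h2 : 2*m-1-(i:ℕ) < m := by have := i.isLt; omega
      rw [hlam₂ i h2 (by omega)]
      simp only [Lfun, mu', if_neg h, dif_pos h2]
      push_cast
      rfl
  have hμ : ∀ i : Fin m, (μ i : ℚ) = (mu' m μ i.val : ℚ) := by
    intro i
    simp only [mu', dif_pos i.isLt, Fin.eta]
  -- convert the four products
  have hconv1 : (∏ i : Fin (2*m), ∏ j ∈ Finset.Ioi i,
        ((lam i : ℚ) - (lam j : ℚ) + (j : ℚ) - (i : ℚ)) / ((j : ℚ) - (i : ℚ)))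
      = P (2*m) (fun a b =>
          (Lfun m μ a - Lfun m μ b + (b:ℚ) - (a:ℚ)) / ((b:ℚ) - (a:ℚ))) := by
    rw [← fin_double]
    exact prod_congr rfl fun i _ => prod_congr rfl fun j _ => by rw [hLam i, hLam j]
  have hconv2 : (∏ i : Fin m, ∏ j ∈ Finset.Ioi i,
        ((ν i - ν j + (j : ℚ) - (i : ℚ)) * (ν i + ν j + 2 * m - (i : ℚ) - (j : ℚ) - 2)) /
          (((j : ℚ) - (i : ℚ)) * (2 * m - (i : ℚ) - (j : ℚ) - 2)))
      = P m (fun a b => (Gm m μ a b * Gp m μ a b) /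
          (((b:ℚ) - (a:ℚ)) * (2*(m:ℚ) - (a:ℚ) - (b:ℚ) - 2))) := by
    rw [← fin_double]
    refine prod_congr rfl fun i _ => prod_congr rfl fun j _ => ?_
    rw [hν i, hν j, hμ i, hμ j]
    show _ = (Gm m μ i.val j.val * Gp m μ i.val j.val) / _
    simp only [Gm, Gp, Bfun]
    ring
  have hconvP1 : (∏ i : Fin m, (2 * (m:ℚ) - 2 * (i : ℚ) - 1))
      = ∏ i ∈ range m, (2*(m:ℚ) - 2*(i:ℚ) - 1) :=
    Fin.prod_univ_eq_prod_range (fun k => 2*(m:ℚ) - 2*(k:ℚ) - 1) m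
  have hconvP2 : (∏ i : Fin m, (2 * (μ i : ℚ) + 2 * m - 2 * (i : ℚ) - 1))
      = ∏ i ∈ range m, Bfun m μ i := by
    rw [← Fin.prod_univ_eq_prod_range (Bfun m μ) m]
    refine prod_congr rfl fun i _ => ?_
    rw [hμ i]
    show _ = Bfun m μ i.val
    simp only [Bfun]
  rw [hconv1, hconv2, hconvP1, hconvP2]
  -- split the quotients
  have hdiv1 : P (2*m) (fun a b =>
        (Lfun m μ a - Lfun m μ b + (b:ℚ) - (a:ℚ)) / ((b:ℚ) - (a:ℚ)))
      = P (2*m) (fun a b => Lfun m μ a - Lfun m μ b + (b:ℚ) - (a:ℚ))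
        / P (2*m) (fun a b => (b:ℚ) - (a:ℚ)) := by
    unfold P
    rw [← prod_div_distrib]
    exact prod_congr rfl fun i _ => prod_div_distrib _ _
  have hdiv2 : P m (fun a b => (Gm m μ a b * Gp m μ a b) /
        (((b:ℚ) - (a:ℚ)) * (2*(m:ℚ) - (a:ℚ) - (b:ℚ) - 2)))
      = P m (fun a b => Gm m μ a b * Gp m μ a b)
        / P m (fun a b => ((b:ℚ) - (a:ℚ)) * (2*(m:ℚ) - (a:ℚ) - (b:ℚ) - 2)) := by
    unfold P
    rw [← prod_div_distrib]
    exact prod_congr rfl fun i _ => prod_div_distrib _ _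
  rw [hdiv1, hdiv2]
  -- numerators
  have hA : P (2*m) (fun a b => Lfun m μ a - Lfun m μ b + (b:ℚ) - (a:ℚ))
      = (P m (Gm m μ) * P m (Gp m μ))^2 * ∏ i ∈ range m, Bfun m μ i := by
    rw [two_mul]
    exact lemA m μ
  have hmulN : P m (fun a b => Gm m μ a b * Gp m μ a b) = P m (Gm m μ) * P m (Gp m μ) := by
    unfold P
    rw [← prod_mul_distrib]
    exact prod_congr rfl fun i _ => prod_mul_distrib
  -- denominators via ℕ
  have hn1 : P (2*m) (fun a b => (b:ℚ) - (a:ℚ)) = ((P (2*m) (fun i j => j - i) : ℕ) : ℚ) := by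
    rw [P_cast]
    exact P_congr fun i j hij hj => by rw [Nat.cast_sub hij.le]
  have hn2 : P m (fun a b => ((b:ℚ) - (a:ℚ)) * (2*(m:ℚ) - (a:ℚ) - (b:ℚ) - 2))
      = ((P m (fun i j => (j - i) * (2*m-2-i-j)) : ℕ) : ℚ) := by
    rw [P_cast]
    refine P_congr fun i j hij hjm => ?_
    rw [Nat.cast_mul, Nat.cast_sub hij.le, Nat.cast_sub (show j ≤ 2*m-2-i by omega),
      Nat.cast_sub (show i ≤ 2*m-2 by omega), Nat.cast_sub (show 2 ≤ 2*m by omega)]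
    push_cast
    ring
  have hn3 : (∏ i ∈ range m, (2*(m:ℚ) - 2*(i:ℚ) - 1))
      = ((∏ i ∈ range m, (2*m-2*i-1) : ℕ) : ℚ) := by
    rw [Nat.cast_prod]
    refine prod_congr rfl fun i hi => ?_
    rw [mem_range] at hi
    rw [Nat.cast_sub (show 1 ≤ 2*m-2*i by omega), Nat.cast_sub (show 2*i ≤ 2*m by omega)]
    push_cast
    ring
  have hb1 : P m (fun i j => (j - i) * (2*m-2-i-j)) = P m (fun i j => (j - i) * (i + j)) := by
    rw [P_reflect m (fun i j => (j - i) * (2*m-2-i-j))]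
    refine P_congr fun i j hij hjm => ?_
    show ((m-1-i) - (m-1-j)) * (2*m-2-(m-1-j)-(m-1-i)) = (j - i) * (i + j)
    have e1 : (m-1-i) - (m-1-j) = j - i := by omega
    have e2 : 2*m-2-(m-1-j)-(m-1-i) = i+j := by omega
    rw [e1, e2]
  have hb2 : (∏ i ∈ range m, (2*m-2*i-1)) = ∏ i ∈ range m, (2*i+1) := by
    calc (∏ i ∈ range m, (2*m-2*i-1)) = ∏ i ∈ range m, (2*(m-1-i)+1) := by
          refine prod_congr rfl fun i hi => ?_
          rw [mem_range] at hi
          omega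
      _ = ∏ i ∈ range m, (2*i+1) := prod_range_reflect (fun i => 2*i+1) m
  have hnat : P (2*m) (fun i j => (j : ℕ) - i)
      = (P m (fun i j => (j - i) * (2*m-2-i-j)))^2 * 4^(m-1) * ∏ i ∈ range m, (2*m-2*i-1) := by
    rw [hb1, hb2, two_mul]
    exact lemB_nat m hm1
  have hDG : P (2*m) (fun a b => (b:ℚ) - (a:ℚ))
      = (P m (fun a b => ((b:ℚ) - (a:ℚ)) * (2*(m:ℚ) - (a:ℚ) - (b:ℚ) - 2)))^2 * 4^(m-1)
        * ∏ i ∈ range m, (2*(m:ℚ) - 2*(i:ℚ) - 1) := by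
    rw [hn1, hn2, hn3, hnat]
    push_cast
    ring
  -- nonvanishing
  have hDDpos : 0 < P m (fun i j => (j - i) * (2*m-2-i-j)) := by
    unfold P
    apply prod_pos
    intro i hi
    apply prod_pos
    intro j hj
    rw [mem_range] at hi
    rw [mem_Ico] at hj
    have g1 : 0 < j - i := by omega
    have g2 : 0 < 2*m-2-i-j := by omega
    exact Nat.mul_pos g1 g2
  have hDD : P m (fun a b => ((b:ℚ) - (a:ℚ)) * (2*(m:ℚ) - (a:ℚ) - (b:ℚ) - 2)) ≠ 0 := by
    rw [hn2]
    exact_mod_cast hDDpos.ne'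
  have hP1 : (∏ i ∈ range m, (2*(m:ℚ) - 2*(i:ℚ) - 1)) ≠ 0 := by
    rw [hn3]
    have : 0 < ∏ i ∈ range m, (2*m-2*i-1) :=
      prod_pos fun i hi => by rw [mem_range] at hi; omega
    exact_mod_cast this.ne'
  -- finish
  rw [hA, hmulN, hDG]
  have h2ne : (2:ℚ)^(m-1) ≠ 0 := pow_ne_zero _ two_ne_zero
  have h4 : (4:ℚ)^(m-1) = 2^(m-1) * 2^(m-1) := by
    rw [show (4:ℚ) = 2*2 by norm_num, mul_pow]
  rw [h4]
  field_simp
  ring_nf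
  have hQ : (∏ x ∈ range m, (-1 + (m:ℚ) * 2 - (x:ℚ) * 2)) ≠ 0 := by
    rw [show (∏ x ∈ range m, (-1 + (m:ℚ) * 2 - (x:ℚ) * 2))
        = ∏ i ∈ range m, (2*(m:ℚ) - 2*(i:ℚ) - 1) from prod_congr rfl fun x _ => by ring]
    exact hP1
  exact mul_inv_cancel_right₀ hQ _
end

section
/- Let R be a root system with positive system R⁺ and let θ be an automorphism of the root datum of order 2 preserving R⁺. Then the restrictions of roots to the +1 eigenspace of θ (the 'restricted roots', excluding zero restrictions) form a (possibly non-reduced) root system, and restriction gives an injective homomorphism from the θ-fixed subgroup W^θ of the Weyl group into the Weyl group of the restricted root system. -/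
open scoped RealInnerProductSpace

section refl
variable {E : Type} [NormedAddCommGroup E] [InnerProductSpace ℝ E]
variable {s : E → (E ≃ₗ[ℝ] E)}

lemma ips {x : E} (hx : x ≠ 0) : (0:ℝ) < ⟪x, x⟫ :=
  lt_of_le_of_ne real_inner_self_nonneg (fun h => hx (inner_self_eq_zero.mp h.symm))

variable (hs : ∀ α : E, α ≠ 0 → ∀ x : E, s α x = x - ((2 * inner ℝ x α / inner ℝ α α : ℝ)) • α)
include hs

lemma s_apply_self {α : E} (hα : α ≠ 0) : s α α = -α := by
  have hA : ⟪α, α⟫ ≠ 0 := (ips hα).ne'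
  rw [hs α hα α, mul_div_assoc, div_self hA, mul_one]
  module

lemma s_isom {α : E} (hα : α ≠ 0) (x y : E) : ⟪s α x, s α y⟫ = ⟪x, y⟫ := by
  have hA : ⟪α, α⟫ ≠ 0 := (ips hα).ne'
  rw [hs α hα x, hs α hα y]
  simp only [inner_sub_left, inner_sub_right, real_inner_smul_left, real_inner_smul_right]
  rw [real_inner_comm α x, real_inner_comm α y]
  field_simp
  ring

lemma s_invol {α : E} (hα : α ≠ 0) (x : E) : s α (s α x) = x := by
  have hA : ⟪α, α⟫ ≠ 0 := (ips hα).ne'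
  rw [hs α hα x, hs α hα]
  simp only [inner_sub_left, real_inner_smul_left]
  rw [real_inner_comm α x]
  have h : ⟪α,x⟫ - 2 * ⟪α,x⟫ / ⟪α,α⟫ * ⟪α,α⟫ = -⟪α,x⟫ := by
    field_simp
    ring
  rw [h]
  have h2 : 2 * -⟪α,x⟫ / ⟪α,α⟫ = -(2 * ⟪α,x⟫ / ⟪α,α⟫) := by ring
  rw [h2]
  module

lemma s_sq {α : E} (hα : α ≠ 0) : s α * s α = 1 :=
  LinearEquiv.ext fun x => s_invol hs hα x

lemma s_inv {α : E} (hα : α ≠ 0) : (s α)⁻¹ = s α := by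
  rw [eq_comm, eq_inv_iff_mul_eq_one, s_sq hs hα]

lemma s_smul {α : E} (hα : α ≠ 0) {c : ℝ} (hc : c ≠ 0) : s (c • α) = s α := by
  refine LinearEquiv.ext fun x => ?_
  have : c • α ≠ 0 := smul_ne_zero hc hα
  rw [hs _ this x, hs α hα x]
  have hA : ⟪α, α⟫ ≠ 0 := (ips hα).ne'
  simp only [real_inner_smul_right, real_inner_smul_left, smul_smul]
  have h1 : c ^ 2 * c⁻¹ ^ 2 = 1 := by field_simp
  match_scalars
  · ring
  · linear_combination (-(⟪x,α⟫ * (⟪α,α⟫)⁻¹ * 2)) * h1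

lemma s_conj {α : E} (hα : α ≠ 0) (w : E ≃ₗ[ℝ] E)
    (hw : ∀ x y : E, ⟪w x, w y⟫ = ⟪x, y⟫) : s (w α) = w * s α * w⁻¹ := by
  refine LinearEquiv.ext fun x => ?_
  have hwα : w α ≠ 0 := by
    intro h
    exact hα (by simpa using congrArg w.symm h)
  show s (w α) x = w (s α (w⁻¹ x))
  rw [hs _ hwα x, hs α hα]
  rw [map_sub, map_smul]
  have h1 : w ((w⁻¹ : E ≃ₗ[ℝ] E) x) = x := w.apply_symm_apply x
  have h2 : ⟪(w⁻¹ : E ≃ₗ[ℝ] E) x, α⟫ = ⟪x, w α⟫ := by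
    rw [← hw ((w⁻¹ : E ≃ₗ[ℝ] E) x) α, h1]
  rw [h1, h2, hw α α]

lemma s_orth {α x : E} (hα : α ≠ 0) (hx : ⟪x, α⟫ = 0) : s α x = x := by
  rw [hs α hα x, hx]
  simp

end refl
set_option linter.unusedSectionVars false
set_option linter.unusedVariables false
section generic
variable {E : Type} [NormedAddCommGroup E] [InnerProductSpace ℝ E]

structure RSys (s : E → (E ≃ₗ[ℝ] E)) (P : Finset E) (v : E) : Prop where
  h0 : (0:E) ∉ P
  hs : ∀ α : E, α ≠ 0 → ∀ x : E, s α x = x - ((2 * inner ℝ x α / inner ℝ α α : ℝ)) • α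
  stab : ∀ α ∈ P, ∀ β ∈ P, s α β ∈ P
  crys : ∀ α ∈ P, ∀ β ∈ P, ∃ k : ℤ, 2 * (inner ℝ α β : ℝ) = (k:ℝ) * inner ℝ β β
  reg : ∀ α ∈ P, (inner ℝ v α : ℝ) ≠ 0

variable (s : E → (E ≃ₗ[ℝ] E)) (P : Finset E) (v : E)

noncomputable def RPos : Finset E := P.filter fun x => 0 < (inner ℝ v x : ℝ)

def RSimple (x : E) : Prop := x ∈ RPos P v ∧ ∀ y ∈ RPos P v, ∀ z ∈ RPos P v, x ≠ y + z

def RNN (x : E) : Prop := ∃ c : E → ℝ, (∀ γ ∈ RPos P v, 0 ≤ c γ) ∧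
  (∀ γ ∈ RPos P v, ¬ RSimple P v γ → c γ = 0) ∧ x = ∑ γ ∈ RPos P v, c γ • γ

def RW : Subgroup (E ≃ₗ[ℝ] E) := Subgroup.closure {g | ∃ α ∈ P, g = s α}

variable {s P v}

namespace RSys
variable {s : E → (E ≃ₗ[ℝ] E)} {P : Finset E} {v : E} (h : RSys s P v)
include h

lemma ne0 {α : E} (hα : α ∈ P) : α ≠ 0 := fun e => h.h0 (e ▸ hα)

lemma Apos {α : E} (hα : α ∈ P) : (0:ℝ) < ⟪α, α⟫ := ips (h.ne0 hα)

lemma neg_mem {α : E} (hα : α ∈ P) : -α ∈ P := by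
  have := h.stab α hα α hα
  rwa [s_apply_self h.hs (h.ne0 hα)] at this

lemma mem_pos {x : E} (hx : x ∈ RPos P v) : x ∈ P := (Finset.mem_filter.mp hx).1

lemma vpos {x : E} (hx : x ∈ RPos P v) : (0:ℝ) < ⟪v, x⟫ := (Finset.mem_filter.mp hx).2

lemma pos_or_neg {α : E} (hα : α ∈ P) : α ∈ RPos P v ∨ -α ∈ RPos P v := by
  rcases lt_or_gt_of_ne (h.reg α hα) with hlt | hgt
  · right
    exact Finset.mem_filter.mpr ⟨h.neg_mem hα, by rw [inner_neg_right]; linarith⟩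
  · left; exact Finset.mem_filter.mpr ⟨hα, hgt⟩

omit h in
lemma midx_lt {x y : E} (hx : x ∈ RPos P v) (hy : y ∈ RPos P v)
    (hlt : (⟪v, y⟫ : ℝ) < ⟪v, x⟫) :
    ((RPos P v).filter fun z => (⟪v, z⟫ : ℝ) < ⟪v, y⟫).card <
      ((RPos P v).filter fun z => (⟪v, z⟫ : ℝ) < ⟪v, x⟫).card := by
  apply Finset.card_lt_card
  rw [Finset.ssubset_iff_of_subset]
  · exact ⟨y, Finset.mem_filter.mpr ⟨hy, hlt⟩, fun hc => absurd (Finset.mem_filter.mp hc).2 (lt_irrefl _)⟩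
  · intro a ha
    rcases Finset.mem_filter.mp ha with ⟨h1, h2⟩
    exact Finset.mem_filter.mpr ⟨h1, h2.trans hlt⟩

lemma nn_of_pos {x : E} (hx : x ∈ RPos P v) : RNN P v x := by
  suffices H : ∀ n : ℕ, ∀ x, x ∈ RPos P v →
      ((RPos P v).filter fun z => (⟪v, z⟫ : ℝ) < ⟪v, x⟫).card = n → RNN P v x from
    H _ x hx rfl
  classical
  intro n
  induction n using Nat.strong_induction_on with
  | _ n ih =>
  intro x hx hmx
  by_cases hsimp : RSimple P v x
  · refine ⟨fun γ => if γ = x then 1 else 0, ?_, ?_, ?_⟩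
    · intro γ _; dsimp only; split <;> norm_num
    · intro γ _ hns
      dsimp only
      split
      · next he => exact absurd (he ▸ hsimp) hns
      · rfl
    · rw [Finset.sum_eq_single x]
      · simp
      · intro b _ hb; simp [hb]
      · intro hnx; exact absurd hx hnx
  · have hex : ∃ y ∈ RPos P v, ∃ z ∈ RPos P v, x = y + z := by
      by_contra hno; push_neg at hno; exact hsimp ⟨hx, hno⟩
    obtain ⟨y, hy, z, hz, hxyz⟩ := hex
    have hvy := h.vpos hy
    have hvz := h.vpos hz
    have hvx : (⟪v, x⟫ : ℝ) = ⟪v, y⟫ + ⟪v, z⟫ := by rw [hxyz, inner_add_right]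
    obtain ⟨a, ha1, ha2, ha3⟩ := ih _ (hmx ▸ midx_lt hx hy (by linarith)) y hy rfl
    obtain ⟨b, hb1, hb2, hb3⟩ := ih _ (hmx ▸ midx_lt hx hz (by linarith)) z hz rfl
    refine ⟨fun γ => a γ + b γ, ?_, ?_, ?_⟩
    · intro γ hγ; have := ha1 γ hγ; have := hb1 γ hγ; dsimp only; linarith
    · intro γ hγ hns; dsimp only; rw [ha2 γ hγ hns, hb2 γ hγ hns, add_zero]
    · dsimp only
      rw [hxyz, ha3, hb3, ← Finset.sum_add_distrib]
      exact Finset.sum_congr rfl fun γ _ => (add_smul _ _ _).symm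

lemma diff_mem {α β : E} (hα : α ∈ P) (hβ : β ∈ P) (hip : (0:ℝ) < ⟪α, β⟫)
    (hne : α ≠ β) : α - β ∈ P ∨ β - α ∈ P := by
  obtain ⟨k, hk⟩ := h.crys α hα β hβ
  obtain ⟨m, hm⟩ := h.crys β hβ α hα
  have hA := h.Apos hα
  have hB := h.Apos hβ
  have hC : (⟪β, α⟫ : ℝ) = ⟪α, β⟫ := real_inner_comm α β
  rw [hC] at hm
  have hk1 : 1 ≤ k := by
    have h1 : (0:ℝ) < (k:ℝ) := by nlinarith
    have h2 : 0 < k := by exact_mod_cast h1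
    omega
  have hm1 : 1 ≤ m := by
    have h1 : (0:ℝ) < (m:ℝ) := by nlinarith
    have h2 : 0 < m := by exact_mod_cast h1
    omega
  by_cases hk2 : k = 1
  · left
    have := h.stab β hβ α hα
    rwa [h.hs β (h.ne0 hβ) α, hk, hk2, Int.cast_one, one_mul,
      div_self hB.ne', one_smul] at this
  by_cases hm2 : m = 1
  · right
    have := h.stab α hα β hβ
    rwa [h.hs α (h.ne0 hα) β, hC, hm, hm2, Int.cast_one, one_mul,
      div_self hA.ne', one_smul] at this
  · exfalso
    have hcs := real_inner_mul_inner_self_le α β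
    have key : 4 * (⟪α,β⟫ * ⟪α,β⟫) = ((k:ℝ) * m) * (⟪α,α⟫ * ⟪β,β⟫) := by
      linear_combination (2*(⟪α,β⟫:ℝ)) * hm + ((m:ℝ)*(⟪α,α⟫:ℝ)) * hk
    have hkm : (k:ℝ) * m ≤ 4 := by nlinarith [mul_pos hA hB]
    have hk2' : 2 ≤ k := by omega
    have hm2' : 2 ≤ m := by omega
    have hkm4 : (k:ℝ) * m = 4 := by
      have h2k : (2:ℝ) ≤ (k:ℝ) := by exact_mod_cast hk2'
      have h2m : (2:ℝ) ≤ (m:ℝ) := by exact_mod_cast hm2'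
      nlinarith
    have hkeq : k = 2 ∧ m = 2 := by
      have h4 : k * m = 4 := by exact_mod_cast hkm4
      constructor <;> nlinarith
    have hCB : (⟪α, β⟫ : ℝ) = ⟪β, β⟫ := by
      rw [hkeq.1] at hk; push_cast at hk; linarith
    have hCA : (⟪α, β⟫ : ℝ) = ⟪α, α⟫ := by
      rw [hkeq.2] at hm; push_cast at hm; linarith
    apply hne
    rw [← sub_eq_zero, ← inner_self_eq_zero (𝕜 := ℝ)]
    rw [inner_sub_left, inner_sub_right, inner_sub_right, hC]
    linarith

lemma simple_inner_nonpos {δ γ : E} (hδ : RSimple P v δ) (hγ : RSimple P v γ)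
    (hne : δ ≠ γ) : (⟪δ, γ⟫ : ℝ) ≤ 0 := by
  by_contra hip
  push_neg at hip
  have hδP := h.mem_pos hδ.1
  have hγP := h.mem_pos hγ.1
  rcases h.diff_mem hδP hγP hip hne with hd | hd
  · rcases h.pos_or_neg hd with hp | hp
    · exact hδ.2 γ hγ.1 (δ - γ) hp (by abel)
    · rw [neg_sub] at hp
      exact hγ.2 δ hδ.1 (γ - δ) hp (by abel)
  · rcases h.pos_or_neg hd with hp | hp
    · exact hγ.2 δ hδ.1 (γ - δ) hp (by abel)
    · rw [neg_sub] at hp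
      exact hδ.2 γ hγ.1 (δ - γ) hp (by abel)


lemma s_perm {δ x : E} (hδ : RSimple P v δ) (hx : x ∈ RPos P v)
    (hnd : ∀ c : ℝ, x ≠ c • δ) : s δ x ∈ RPos P v := by
  classical
  have hδP := h.mem_pos hδ.1
  have hδ0 := h.ne0 hδP
  have hxP := h.mem_pos hx
  have hsxP : s δ x ∈ P := h.stab δ hδP x hxP
  rcases h.pos_or_neg hsxP with hp | hp
  · exact hp
  exfalso
  set k : ℝ := 2 * ⟪x, δ⟫ / ⟪δ, δ⟫ with hkdef
  have hsxe : s δ x = x - k • δ := h.hs δ hδ0 x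
  obtain ⟨a, ha1, ha2, ha3⟩ := h.nn_of_pos hx
  obtain ⟨b, hb1, hb2, hb3⟩ := h.nn_of_pos hp
  have hsum : ∑ γ ∈ RPos P v, (a γ + b γ) • γ = k • δ := by
    rw [Finset.sum_congr rfl fun γ _ => add_smul (a γ) (b γ) γ, Finset.sum_add_distrib,
      ← ha3, ← hb3, hsxe]
    abel
  have heδ : δ ∈ RPos P v := hδ.1
  have hsplit : (a δ + b δ) • δ + ∑ γ ∈ (RPos P v).erase δ, (a γ + b γ) • γ
      = ∑ γ ∈ RPos P v, (a γ + b γ) • γ := Finset.add_sum_erase _ (fun γ => (a γ + b γ) • γ) heδ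
  set y := ∑ γ ∈ (RPos P v).erase δ, (a γ + b γ) • γ with hy
  set t : ℝ := k - (a δ + b δ) with ht
  have hyt : y = t • δ := by
    rw [ht, sub_smul, ← hsum, ← hsplit]
    abel
  have hmemerase : ∀ γ ∈ (RPos P v).erase δ, γ ∈ RPos P v :=
    fun γ hγ => Finset.mem_of_mem_erase hγ
  have hvy2 : (⟪v, y⟫ : ℝ) = ∑ γ ∈ (RPos P v).erase δ, (a γ + b γ) * ⟪v, γ⟫ := by
    rw [hy, inner_sum]
    exact Finset.sum_congr rfl fun γ _ => real_inner_smul_right v γ _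
  rcases le_or_gt t 0 with htle | htpos
  · have hvy1 : (⟪v, y⟫ : ℝ) = t * ⟪v, δ⟫ := by rw [hyt, real_inner_smul_right]
    have hterms : ∀ γ ∈ (RPos P v).erase δ, 0 ≤ (a γ + b γ) * ⟪v, γ⟫ := fun γ hγ =>
      mul_nonneg (by have := ha1 γ (hmemerase γ hγ); have := hb1 γ (hmemerase γ hγ); linarith)
        (h.vpos (hmemerase γ hγ)).le
    have hsum0 : ∑ γ ∈ (RPos P v).erase δ, (a γ + b γ) * ⟪v, γ⟫ = 0 := by
      have h1 : (⟪v, y⟫ : ℝ) ≤ 0 := hvy1 ▸ mul_nonpos_of_nonpos_of_nonneg htle (h.vpos heδ).le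
      have h2 : 0 ≤ ∑ γ ∈ (RPos P v).erase δ, (a γ + b γ) * ⟪v, γ⟫ := Finset.sum_nonneg hterms
      linarith [hvy2 ▸ h1]
    have hzero := (Finset.sum_eq_zero_iff_of_nonneg hterms).mp hsum0
    have hax : x = a δ • δ := by
      rw [ha3, ← Finset.add_sum_erase _ _ heδ, Finset.sum_eq_zero, add_zero]
      intro γ hγ
      have hvγ := h.vpos (hmemerase γ hγ)
      have he0 : a γ + b γ = 0 := by
        have := hzero γ hγ
        rcases mul_eq_zero.mp this with h' | h'
        · exact h'
        · exact absurd h' hvγ.ne'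
      have ha0 : a γ = 0 := by
        have := ha1 γ (hmemerase γ hγ); have := hb1 γ (hmemerase γ hγ); linarith
      rw [ha0, zero_smul]
    exact hnd (a δ) hax
  · have hyδ : (⟪y, δ⟫ : ℝ) ≤ 0 := by
      have : (⟪y, δ⟫ : ℝ) = ∑ γ ∈ (RPos P v).erase δ, (a γ + b γ) * ⟪γ, δ⟫ := by
        rw [hy, sum_inner]
        exact Finset.sum_congr rfl fun γ _ => real_inner_smul_left γ δ _
      rw [this]
      apply Finset.sum_nonpos
      intro γ hγ
      by_cases hsγ : RSimple P v γ
      · apply mul_nonpos_of_nonneg_of_nonpos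
        · have := ha1 γ (hmemerase γ hγ); have := hb1 γ (hmemerase γ hγ); linarith
        · exact h.simple_inner_nonpos hsγ hδ (Finset.ne_of_mem_erase hγ)
      · rw [ha2 γ (hmemerase γ hγ) hsγ, hb2 γ (hmemerase γ hγ) hsγ, add_zero, zero_mul]
    have hyy : (⟪y, y⟫ : ℝ) ≤ 0 := by
      calc (⟪y, y⟫ : ℝ) = t * ⟪y, δ⟫ := by
            nth_rewrite 2 [hyt]
            rw [real_inner_smul_right]
        _ ≤ 0 := mul_nonpos_of_nonneg_of_nonpos htpos.le hyδ
    have hy0 : y = 0 := real_inner_self_nonpos.mp hyy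
    rw [hy0] at hyt
    rcases smul_eq_zero.mp hyt.symm with h' | h'
    · exact htpos.ne' h'
    · exact hδ0 h'

lemma pos_of_simple_pos (g : E ≃ₗ[ℝ] E) (hg : ∀ δ, RSimple P v δ → (0:ℝ) < ⟪v, g δ⟫)
    {x : E} (hx : x ∈ RPos P v) : (0:ℝ) < ⟪v, g x⟫ := by
  obtain ⟨c, hc1, hc2, hc3⟩ := h.nn_of_pos hx
  have hvgx : (⟪v, g x⟫ : ℝ) = ∑ γ ∈ RPos P v, c γ * ⟪v, g γ⟫ := by
    rw [hc3, map_sum, inner_sum]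
    exact Finset.sum_congr rfl fun γ _ => by rw [map_smul, real_inner_smul_right]
  have hterm : ∀ γ ∈ RPos P v, 0 ≤ c γ * ⟪v, g γ⟫ := by
    intro γ hγ
    by_cases hsγ : RSimple P v γ
    · exact mul_nonneg (hc1 γ hγ) (hg γ hsγ).le
    · rw [hc2 γ hγ hsγ, zero_mul]
  have hexists : ∃ γ ∈ RPos P v, 0 < c γ * ⟪v, g γ⟫ := by
    have hvx : (⟪v, x⟫ : ℝ) = ∑ γ ∈ RPos P v, c γ * ⟪v, γ⟫ := by
      rw [hc3, inner_sum]
      exact Finset.sum_congr rfl fun γ _ => real_inner_smul_right v γ _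
    have hex2 : ∃ γ ∈ RPos P v, 0 < c γ * ⟪v, γ⟫ := by
      by_contra hno2
      push_neg at hno2
      have := Finset.sum_nonpos hno2
      rw [← hvx] at this
      linarith [h.vpos hx]
    obtain ⟨γ, hγ, hpos⟩ := hex2
    have hvγ := h.vpos hγ
    have hcγ : 0 < c γ := by nlinarith
    have hsγ : RSimple P v γ := by
      by_contra hns
      rw [hc2 γ hγ hns] at hcγ
      exact lt_irrefl _ hcγ
    exact ⟨γ, hγ, mul_pos hcγ (hg γ hsγ)⟩
  rw [hvgx]
  exact Finset.sum_pos' hterm hexists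

lemma w_isom {w : E ≃ₗ[ℝ] E} (hw : w ∈ RW s P) : ∀ x y : E, (⟪w x, w y⟫ : ℝ) = ⟪x, y⟫ := by
  induction hw using Subgroup.closure_induction with
  | mem g hg =>
    obtain ⟨α, hα, rfl⟩ := hg
    exact fun x y => s_isom h.hs (h.ne0 hα) x y
  | one => intro x y; rfl
  | mul f g hf hg ihf ihg =>
    intro x y
    exact (ihf (g x) (g y)).trans (ihg x y)
  | inv f hf ihf =>
    intro x y
    have h1 : f (f⁻¹ x) = x := congrFun (congrArg (fun (e : E ≃ₗ[ℝ] E) => (e : E → E)) (mul_inv_cancel f)) x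
    have h2 : f (f⁻¹ y) = y := congrFun (congrArg (fun (e : E ≃ₗ[ℝ] E) => (e : E → E)) (mul_inv_cancel f)) y
    calc (⟪f⁻¹ x, f⁻¹ y⟫ : ℝ) = ⟪f (f⁻¹ x), f (f⁻¹ y)⟫ := (ihf _ _).symm
      _ = ⟪x, y⟫ := by rw [h1, h2]

lemma w_maps' {w : E ≃ₗ[ℝ] E} (hw : w ∈ RW s P) : ∀ β ∈ P, w β ∈ P ∧ w⁻¹ β ∈ P := by
  induction hw using Subgroup.closure_induction with
  | mem g hg =>
    obtain ⟨α, hα, rfl⟩ := hg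
    intro β hβ
    refine ⟨h.stab α hα β hβ, ?_⟩
    rw [s_inv h.hs (h.ne0 hα)]
    exact h.stab α hα β hβ
  | one =>
    intro β hβ
    rw [inv_one]
    exact ⟨hβ, hβ⟩
  | mul f g hf hg ihf ihg =>
    intro β hβ
    constructor
    · exact (ihf _ ((ihg β hβ).1)).1
    · rw [mul_inv_rev]
      exact (ihg _ ((ihf β hβ).2)).2
  | inv f hf ihf =>
    intro β hβ
    rw [inv_inv]
    exact ⟨(ihf β hβ).2, (ihf β hβ).1⟩

lemma w_maps {w : E ≃ₗ[ℝ] E} (hw : w ∈ RW s P) : ∀ β ∈ P, w β ∈ P :=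
  fun β hβ => (h.w_maps' hw β hβ).1


lemma s_mem_simple : ∀ x ∈ RPos P v,
    s x ∈ Subgroup.closure {g | ∃ δ, RSimple P v δ ∧ g = s δ} := by
  suffices H : ∀ n : ℕ, ∀ x, x ∈ RPos P v →
      ((RPos P v).filter fun z => (⟪v, z⟫ : ℝ) < ⟪v, x⟫).card = n →
      s x ∈ Subgroup.closure {g | ∃ δ, RSimple P v δ ∧ g = s δ} from
    fun x hx => H _ x hx rfl
  intro n
  induction n using Nat.strong_induction_on with
  | _ n ih =>
  intro x hx hmx
  have hx0 : x ≠ 0 := h.ne0 (h.mem_pos hx)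
  by_cases hd : ∃ δ, RSimple P v δ ∧ ∃ c : ℝ, x = c • δ
  · obtain ⟨δ, hδ, c, rfl⟩ := hd
    have hc0 : c ≠ 0 := by
      rintro rfl
      rw [zero_smul] at hx0
      exact hx0 rfl
    rw [s_smul h.hs (h.ne0 (h.mem_pos hδ.1)) hc0]
    exact Subgroup.subset_closure ⟨δ, hδ, rfl⟩
  · push_neg at hd
    obtain ⟨c, hc1, hc2, hc3⟩ := h.nn_of_pos hx
    have hxx : (⟪x, x⟫ : ℝ) = ∑ γ ∈ RPos P v, c γ * ⟪x, γ⟫ := by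
      nth_rewrite 2 [hc3]
      rw [inner_sum]
      exact Finset.sum_congr rfl fun γ _ => real_inner_smul_right x γ _
    have hex : ∃ γ ∈ RPos P v, 0 < c γ * ⟪x, γ⟫ := by
      by_contra hno
      push_neg at hno
      have := Finset.sum_nonpos hno
      rw [← hxx] at this
      linarith [ips hx0]
    obtain ⟨δ, hδpos, hδprod⟩ := hex
    have hcδ : 0 < c δ := by
      rcases lt_trichotomy (c δ) 0 with h' | h' | h'
      · linarith [hc1 δ hδpos]
      · rw [h', zero_mul] at hδprod; linarith
      · exact h'
    have hsδ : RSimple P v δ := by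
      by_contra hns
      rw [hc2 δ hδpos hns] at hcδ
      exact lt_irrefl _ hcδ
    have hxδ : (0:ℝ) < ⟪x, δ⟫ := by nlinarith
    have hδ0 : δ ≠ 0 := h.ne0 (h.mem_pos hδpos)
    have hnd : ∀ cc : ℝ, x ≠ cc • δ := hd δ hsδ
    have hx' : s δ x ∈ RPos P v := h.s_perm hsδ hx hnd
    have hkpos : (0:ℝ) < 2 * ⟪x, δ⟫ / ⟪δ, δ⟫ := by
      apply div_pos (by linarith) (ips hδ0)
    have hvlt : (⟪v, s δ x⟫ : ℝ) < ⟪v, x⟫ := by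
      rw [h.hs δ hδ0 x, inner_sub_right, real_inner_smul_right]
      have := h.vpos hδpos
      nlinarith
    have hmlt : ((RPos P v).filter fun z => (⟪v, z⟫ : ℝ) < ⟪v, s δ x⟫).card < n :=
      hmx ▸ midx_lt hx hx' hvlt
    have ihs := ih _ hmlt (s δ x) hx' rfl
    have hconj : s x = s δ * s (s δ x) * (s δ)⁻¹ := by
      have := s_conj h.hs (h.ne0 (h.mem_pos hx')) (s δ) (fun a b => s_isom h.hs hδ0 a b)
      rw [← this, s_invol h.hs hδ0 x]
    rw [hconj]
    exact Subgroup.mul_mem _ (Subgroup.mul_mem _ (Subgroup.subset_closure ⟨δ, hsδ, rfl⟩) ihs)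
      (Subgroup.inv_mem _ (Subgroup.subset_closure ⟨δ, hsδ, rfl⟩))

lemma prod_reverse_eq {l : List E} (hl : ∀ δ ∈ l, δ ≠ 0) :
    ((l.map s).prod)⁻¹ = (l.reverse.map s).prod := by
  induction l with
  | nil => simp
  | cons a t ih =>
    have ha : a ≠ 0 := hl a (List.mem_cons_self)
    have ht : ∀ δ ∈ t, δ ≠ 0 := fun δ hδ => hl δ (List.mem_cons_of_mem a hδ)
    rw [List.map_cons, List.prod_cons, mul_inv_rev, ih ht, List.reverse_cons,
      List.map_append, List.prod_append, List.map_singleton, List.prod_singleton,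
      s_inv h.hs ha]

lemma word {w : E ≃ₗ[ℝ] E}
    (hw : w ∈ Subgroup.closure {g | ∃ δ, RSimple P v δ ∧ g = s δ}) :
    ∃ l : List E, (∀ δ ∈ l, RSimple P v δ) ∧ w = (l.map s).prod := by
  induction hw using Subgroup.closure_induction with
  | mem g hg =>
    obtain ⟨δ, hδ, rfl⟩ := hg
    exact ⟨[δ], by simp [hδ], by simp⟩
  | one => exact ⟨[], by simp, by simp⟩
  | mul f g hf hg ihf ihg =>
    obtain ⟨l1, hl1, rfl⟩ := ihf
    obtain ⟨l2, hl2, rfl⟩ := ihg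
    refine ⟨l1 ++ l2, ?_, by rw [List.map_append, List.prod_append]⟩
    intro δ hδ
    rcases List.mem_append.mp hδ with h' | h'
    · exact hl1 δ h'
    · exact hl2 δ h'
  | inv f hf ihf =>
    obtain ⟨l, hl, rfl⟩ := ihf
    refine ⟨l.reverse, fun δ hδ => hl δ (List.mem_reverse.mp hδ), ?_⟩
    exact h.prod_reverse_eq fun δ hδ => h.ne0 (h.mem_pos (hl δ hδ).1)

lemma W_le_simple {w : E ≃ₗ[ℝ] E} (hw : w ∈ RW s P) :
    w ∈ Subgroup.closure {g | ∃ δ, RSimple P v δ ∧ g = s δ} := by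
  revert hw
  refine fun hw => Subgroup.closure_le (Subgroup.closure {g | ∃ δ, RSimple P v δ ∧ g = s δ}) |>.mpr ?_ hw
  rintro g ⟨α, hα, rfl⟩
  rcases h.pos_or_neg hα with hp | hp
  · exact h.s_mem_simple α hp
  · have : s α = s (-α) := by
      rw [show -α = (-1 : ℝ) • α by simp, s_smul h.hs (h.ne0 hα) (by norm_num)]
    rw [this]
    exact h.s_mem_simple (-α) hp

lemma prod_mem_W {l : List E} (hl : ∀ δ ∈ l, δ ∈ P) : (l.map s).prod ∈ RW s P := by
  apply Subgroup.list_prod_mem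
  intro g hg
  rw [List.mem_map] at hg
  obtain ⟨δ, hδ, rfl⟩ := hg
  exact Subgroup.subset_closure ⟨δ, hl δ hδ, rfl⟩

lemma del : ∀ (l : List E), (∀ δ ∈ l, RSimple P v δ) → ∀ α : E, RSimple P v α →
    (⟪v, (l.map s).prod α⟫ : ℝ) < 0 →
    ∃ l' : List E, (∀ δ ∈ l', RSimple P v δ) ∧ l'.length + 1 = l.length ∧
      (l.map s).prod * s α = (l'.map s).prod := by
  intro l
  induction l with
  | nil =>
    intro _ α hα hneg
    simp only [List.map_nil, List.prod_nil] at hneg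
    exact absurd hneg (not_lt.mpr (h.vpos hα.1).le)
  | cons δ₁ rest ih =>
    intro hl α hα hneg
    have hδ₁ : RSimple P v δ₁ := hl δ₁ (List.mem_cons_self)
    have hrest : ∀ δ ∈ rest, RSimple P v δ := fun δ hδ => hl δ (List.mem_cons_of_mem δ₁ hδ)
    have hrestP : ∀ δ ∈ rest, δ ∈ P := fun δ hδ => h.mem_pos (hrest δ hδ).1
    have huW : (rest.map s).prod ∈ RW s P := h.prod_mem_W hrestP
    set u := (rest.map s).prod with hu
    set x := u α with hxdef
    have hxP : x ∈ P := h.w_maps huW α (h.mem_pos hα.1)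
    have hprodcons : ((δ₁ :: rest).map s).prod = s δ₁ * u := by
      rw [List.map_cons, List.prod_cons]
    rcases lt_or_ge (⟪v, x⟫ : ℝ) 0 with hxneg | hxnn
    · obtain ⟨l', hl', hlen, heq⟩ := ih hrest α hα hxneg
      refine ⟨δ₁ :: l', ?_, by simp [← hlen], ?_⟩
      · intro δ hδ
        rcases List.mem_cons.mp hδ with h' | h'
        · exact h' ▸ hδ₁
        · exact hl' δ h'
      · rw [hprodcons, List.map_cons, List.prod_cons, mul_assoc, heq]
    · have hxpos : x ∈ RPos P v := by
        rcases h.pos_or_neg hxP with hp | hp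
        · exact hp
        · exfalso
          have := h.vpos hp
          rw [inner_neg_right] at this
          rcases lt_or_eq_of_le hxnn with h' | h'
          · linarith
          · exact (h.reg x hxP) h'.symm
      have hsneg : (⟪v, s δ₁ x⟫ : ℝ) < 0 := by
        have : ((δ₁ :: rest).map s).prod α = s δ₁ x := by rw [hprodcons]; rfl
        rwa [this] at hneg
      have hxmul : ∃ c : ℝ, x = c • δ₁ := by
        by_contra hno
        push_neg at hno
        have := h.s_perm hδ₁ hxpos hno
        have := h.vpos this
        linarith
      obtain ⟨c, hc⟩ := hxmul
      have hα0 : α ≠ 0 := h.ne0 (h.mem_pos hα.1)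
      have hc0 : c ≠ 0 := by
        rintro rfl
        rw [zero_smul] at hc
        exact h.ne0 hxP hc
      have hsx : s x = s δ₁ := by rw [hc, s_smul h.hs (h.ne0 (h.mem_pos hδ₁.1)) hc0]
      have hconj : s x = u * s α * u⁻¹ :=
        s_conj h.hs hα0 u (h.w_isom huW)
      refine ⟨rest, hrest, by simp, ?_⟩
      rw [hprodcons, ← hsx, hconj]
      group
      rw [mul_assoc, s_sq h.hs hα0, mul_one]


lemma chamber {w : E ≃ₗ[ℝ] E} (hw : w ∈ RW s P)
    (hpos : ∀ x ∈ RPos P v, w x ∈ RPos P v) : w = 1 := by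
  obtain ⟨l, hl, rfl⟩ := h.word (h.W_le_simple hw)
  clear hw
  suffices H : ∀ n : ℕ, ∀ l : List E, l.length = n → (∀ δ ∈ l, RSimple P v δ) →
      (∀ x ∈ RPos P v, (l.map s).prod x ∈ RPos P v) → (l.map s).prod = 1 from
    H _ l rfl hl hpos
  clear hl hpos l
  intro n
  induction n using Nat.strong_induction_on with
  | _ n ih =>
  intro l hlen hl hpos
  rcases List.eq_nil_or_concat l with rfl | ⟨L, b, rfl⟩
  · simp
  · have hb : RSimple P v b := hl b (by simp [List.concat_eq_append])
    have hL : ∀ δ ∈ L, RSimple P v δ := fun δ hδ =>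
      hl δ (by simp [List.concat_eq_append, hδ])
    have hw2 : ((L.concat b).map s).prod = (L.map s).prod * s b := by
      rw [List.concat_eq_append, List.map_append, List.prod_append, List.map_singleton,
        List.prod_singleton]
    have hb0 : b ≠ 0 := h.ne0 (h.mem_pos hb.1)
    have hwb : ((L.concat b).map s).prod b ∈ RPos P v := hpos b hb.1
    have h1 : (L.map s).prod b = -(((L.concat b).map s).prod b) := by
      have h2 : ((L.concat b).map s).prod (s b b) = (L.map s).prod b := by
        rw [hw2]
        show (L.map s).prod (s b (s b b)) = (L.map s).prod b
        rw [s_invol h.hs hb0]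
      rw [s_apply_self h.hs hb0, map_neg] at h2
      rw [← h2]
    have hub : (⟪v, (L.map s).prod b⟫ : ℝ) < 0 := by
      rw [h1, inner_neg_right]
      linarith [h.vpos hwb]
    obtain ⟨l₂, hl₂, hlen₂, heq⟩ := h.del L hL b hb hub
    have hwl₂ : ((L.concat b).map s).prod = (l₂.map s).prod := by rw [hw2, heq]
    have hlt : l₂.length < n := by
      rw [List.length_concat] at hlen
      omega
    have hfin := ih _ hlt l₂ rfl hl₂ (by rw [← hwl₂]; exact hpos)
    rw [hwl₂, hfin]


end RSys
end generic
section theta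
variable {E : Type} [NormedAddCommGroup E] [InnerProductSpace ℝ E]
variable {R : Finset E} {s : E → (E ≃ₗ[ℝ] E)} {θ : E ≃ₗ[ℝ] E}

variable (hR0 : (0 : E) ∉ R)
    (hs : ∀ α : E, α ≠ 0 → ∀ x : E, s α x = x - ((2 * inner ℝ x α / inner ℝ α α : ℝ)) • α)
    (hstab : ∀ α ∈ R, ∀ β ∈ R, s α β ∈ R)
    (hcrys : ∀ α ∈ R, ∀ β ∈ R, ∃ k : ℤ, 2 * (inner ℝ α β : ℝ) = (k : ℝ) * inner ℝ β β)
    (hθinv : ∀ x, θ (θ x) = x)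
    (hθinner : ∀ x y : E, (inner ℝ (θ x) (θ y) : ℝ) = inner ℝ x y)
    (hθR : ∀ α ∈ R, θ α ∈ R)
    (hnoreal : ∀ α ∈ R, θ α ≠ -α)

section basicsθ
include hθinv hθinner

lemma theta_flip (x y : E) : (⟪θ x, y⟫ : ℝ) = ⟪x, θ y⟫ := by
  conv_lhs => rw [← hθinv y]
  rw [hθinner]

lemma proj_fixed (z : E) : θ ((1/2 : ℝ) • (z + θ z)) = (1/2 : ℝ) • (z + θ z) := by
  rw [map_smul, map_add, hθinv]
  congr 1
  abel

lemma fixed_inner {v : E} (hv : θ v = v) (z : E) :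
    (⟪v, (1/2 : ℝ) • (z + θ z)⟫ : ℝ) = ⟪v, z⟫ := by
  rw [real_inner_smul_right, inner_add_right]
  rw [← hθinner v (θ z), hθinv, hv]
  ring

end basicsθ

include hR0 hs hstab hcrys hθinv hθinner hθR hnoreal

lemma tri {α : E} (hα : α ∈ R) :
    θ α = α ∨ ((⟪α, θ α⟫ : ℝ) = 0) ∨
      ((⟪α, θ α⟫ : ℝ) = -(⟪α, α⟫ : ℝ)/2 ∧ α + θ α ∈ R) := by
  have hθα : θ α ∈ R := hθR α hα
  have hα0 : α ≠ 0 := fun e => hR0 (e ▸ hα)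
  have hθα0 : θ α ≠ 0 := fun e => hR0 (e ▸ hθα)
  have hA : (0:ℝ) < ⟪α, α⟫ := ips hα0
  have hAA : (⟪θ α, θ α⟫ : ℝ) = ⟪α, α⟫ := hθinner α α
  obtain ⟨k, hk⟩ := hcrys α hα (θ α) hθα
  rw [hAA] at hk
  have hcs := real_inner_mul_inner_self_le α (θ α)
  rw [hAA] at hcs
  have hk4 : k * k ≤ 4 := by
    have hsq : (2 * (⟪α, θ α⟫:ℝ)) * (2 * (⟪α, θ α⟫:ℝ))
        = ((k:ℝ) * ⟪α, α⟫) * ((k:ℝ) * ⟪α, α⟫) := by rw [hk]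
    have h4 : ((k * k : ℤ) : ℝ) ≤ 4 := by push_cast; nlinarith [mul_pos hA hA]
    exact_mod_cast h4
  have hklb : -2 ≤ k := by nlinarith [sq_nonneg (k + 2), sq_nonneg (k - 2)]
  have hkub : k ≤ 2 := by nlinarith [sq_nonneg (k + 2), sq_nonneg (k - 2)]
  interval_cases k
  · exfalso
    apply hnoreal α hα
    push_cast at hk
    have hz : (⟪α + θ α, α + θ α⟫ : ℝ) = 0 := by
      rw [inner_add_left, inner_add_right, inner_add_right, hAA, real_inner_comm α (θ α)]
      linarith
    have hz2 := inner_self_eq_zero.mp hz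
    exact eq_neg_of_add_eq_zero_right hz2
  · right; right
    push_cast at hk
    have hC : (⟪α, θ α⟫ : ℝ) = -(⟪α, α⟫ : ℝ)/2 := by linarith
    refine ⟨hC, ?_⟩
    have hmem := hstab (θ α) hθα α hα
    rw [hs (θ α) hθα0 α, hAA] at hmem
    have hcoef : 2 * (⟪α, θ α⟫ : ℝ) / ⟪α, α⟫ = -1 := by
      rw [hC]; field_simp
    rw [hcoef] at hmem
    have he : α - (-1 : ℝ) • θ α = α + θ α := by module
    rwa [he] at hmem
  · right; left
    push_cast at hk
    linarith
  · exfalso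
    push_cast at hk
    have hmem := hstab (θ α) hθα α hα
    rw [hs (θ α) hθα0 α, hAA] at hmem
    have hcoef : 2 * (⟪α, θ α⟫ : ℝ) / ⟪α, α⟫ = 1 := by
      rw [hk]; field_simp
    rw [hcoef, one_smul] at hmem
    apply hnoreal (α - θ α) hmem
    rw [map_sub, hθinv]
    exact (neg_sub α (θ α)).symm
  · left
    push_cast at hk
    have hz : (⟪α - θ α, α - θ α⟫ : ℝ) = 0 := by
      rw [inner_sub_left, inner_sub_right, inner_sub_right, hAA, real_inner_comm α (θ α)]
      linarith
    exact (sub_eq_zero.mp (inner_self_eq_zero.mp hz)).symm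

lemma proj_norm {α : E} (hα : α ∈ R) :
    (⟪(1/2 : ℝ) • (α + θ α), (1/2 : ℝ) • (α + θ α)⟫ : ℝ)
      = (⟪α, α⟫ + ⟪α, θ α⟫)/2 := by
  rw [real_inner_smul_left, real_inner_smul_right, inner_add_left, inner_add_right,
    inner_add_right, hθinner α α, real_inner_comm α (θ α)]
  ring

lemma proj_ne0 {α : E} (hα : α ∈ R) : (1/2 : ℝ) • (α + θ α) ≠ 0 := by
  intro h0
  have hα0 : α ≠ 0 := fun e => hR0 (e ▸ hα)
  have hA : (0:ℝ) < ⟪α, α⟫ := ips hα0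
  have hnorm := proj_norm hR0 hs hstab hcrys hθinv hθinner hθR hnoreal hα
  rw [h0, inner_zero_left] at hnorm
  rcases tri hR0 hs hstab hcrys hθinv hθinner hθR hnoreal hα with hc | hc | ⟨hc, _⟩
  · rw [hc, real_inner_comm] at hnorm
    linarith
  · rw [hc] at hnorm
    linarith
  · rw [hc] at hnorm
    linarith

lemma theta_s_comm {γ : E} (hγ0 : γ ≠ 0) (hθγ : θ γ = γ) (z : E) :
    s γ (θ z) = θ (s γ z) := by
  rw [hs γ hγ0 (θ z), hs γ hγ0 z, map_sub, map_smul, hθγ]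
  have he : (⟪θ z, γ⟫ : ℝ) = ⟪z, γ⟫ := by
    conv_lhs => rw [← hθγ]
    exact hθinner z γ
  rw [he]

lemma inner_proj_pair (α β : E) :
    (⟪(1/2 : ℝ) • (α + θ α), (1/2 : ℝ) • (β + θ β)⟫ : ℝ)
      = (⟪α, β⟫ + ⟪α, θ β⟫)/2 := by
  rw [real_inner_smul_left, real_inner_smul_right, inner_add_left, inner_add_right,
    inner_add_right, hθinner α β, theta_flip hθinv hθinner α β]
  ring


lemma goodw {α : E} (hα : α ∈ R) :
    ∃ w : E ≃ₗ[ℝ] E, w ∈ RW s R ∧ (∀ z, w (θ z) = θ (w z)) ∧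
      (∀ z, θ z = z → w z = s ((1/2 : ℝ) • (α + θ α)) z) := by
  have hθα : θ α ∈ R := hθR α hα
  have hα0 : α ≠ 0 := fun e => hR0 (e ▸ hα)
  have hθα0 : θ α ≠ 0 := fun e => hR0 (e ▸ hθα)
  have hA : (0:ℝ) < ⟪α, α⟫ := ips hα0
  have hAA : (⟪θ α, θ α⟫ : ℝ) = ⟪α, α⟫ := hθinner α α
  have hx0 : (1/2 : ℝ) • (α + θ α) ≠ 0 :=
    proj_ne0 hR0 hs hstab hcrys hθinv hθinner hθR hnoreal hα
  rcases tri hR0 hs hstab hcrys hθinv hθinner hθR hnoreal hα with hc | hc | ⟨hc, hp⟩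
  · refine ⟨s α, Subgroup.subset_closure ⟨α, hα, rfl⟩,
      fun z => theta_s_comm hR0 hs hstab hcrys hθinv hθinner hθR hnoreal hα0 hc z, ?_⟩
    intro z _
    have he : (1/2 : ℝ) • (α + θ α) = α := by rw [hc]; module
    rw [he]
  · have hC0 : (⟪θ α, α⟫ : ℝ) = 0 := by rw [real_inner_comm α (θ α)]; exact hc
    have hform : ∀ z, (s α * s (θ α)) z =
        z - (2 * ⟪z, α⟫ / ⟪α, α⟫) • α - (2 * ⟪z, θ α⟫ / ⟪α, α⟫) • θ α := by
      intro z
      show s α (s (θ α) z) = _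
      rw [hs (θ α) hθα0 z, hAA, hs α hα0]
      rw [inner_sub_left, real_inner_smul_left, hC0, mul_zero, sub_zero]
      module
    refine ⟨s α * s (θ α),
      Subgroup.mul_mem _ (Subgroup.subset_closure ⟨α, hα, rfl⟩)
        (Subgroup.subset_closure ⟨θ α, hθα, rfl⟩), ?_, ?_⟩
    · intro z
      have h1 : (⟪θ z, α⟫ : ℝ) = ⟪z, θ α⟫ := theta_flip hθinv hθinner z α
      have h2 : (⟪θ z, θ α⟫ : ℝ) = ⟪z, α⟫ := hθinner z α
      rw [hform (θ z), hform z, h1, h2, map_sub, map_sub, map_smul, map_smul, hθinv]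
      module
    · intro z hz
      have hzθα : (⟪z, θ α⟫ : ℝ) = ⟪z, α⟫ := by
        calc (⟪z, θ α⟫ : ℝ) = ⟪θ z, θ α⟫ := by rw [hz]
          _ = ⟪z, α⟫ := hθinner z α
      have hxx : (⟪(1/2:ℝ) • (α + θ α), (1/2:ℝ) • (α + θ α)⟫ : ℝ) = ⟪α, α⟫ / 2 := by
        rw [proj_norm hR0 hs hstab hcrys hθinv hθinner hθR hnoreal hα, hc]
        ring
      have hzx : (⟪z, (1/2:ℝ) • (α + θ α)⟫ : ℝ) = ⟪z, α⟫ := by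
        rw [real_inner_smul_right, inner_add_right, hzθα]
        ring
      rw [hform z, hzθα, hs _ hx0 z, hxx, hzx]
      match_scalars
      all_goals field_simp
      all_goals ring
  · have hp0 : α + θ α ≠ 0 := fun e => hR0 (e ▸ hp)
    have hθp : θ (α + θ α) = α + θ α := by
      rw [map_add, hθinv]
      abel
    refine ⟨s (α + θ α), Subgroup.subset_closure ⟨_, hp, rfl⟩,
      fun z => theta_s_comm hR0 hs hstab hcrys hθinv hθinner hθR hnoreal hp0 hθp z, ?_⟩
    intro z _
    rw [s_smul hs hp0 (by norm_num : (1/2:ℝ) ≠ 0)]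

lemma part2 (hmaps : ∀ g ∈ RW s R, ∀ β ∈ R, g β ∈ R) {α β : E} (hα : α ∈ R) (hβ : β ∈ R) :
    ∃ γ ∈ R, s ((1/2 : ℝ) • (α + θ α)) ((1/2 : ℝ) • (β + θ β))
      = (1/2 : ℝ) • (γ + θ γ) := by
  obtain ⟨w, hwW, hweq, hwfix⟩ := goodw hR0 hs hstab hcrys hθinv hθinner hθR hnoreal hα
  refine ⟨w β, hmaps w hwW β hβ, ?_⟩
  rw [← hwfix _ (proj_fixed hθinv hθinner β)]
  rw [map_smul, map_add, hweq β]

lemma part3 {α β : E} (hα : α ∈ R) (hβ : β ∈ R) :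
    ∃ k : ℤ, 2 * (⟪(1/2 : ℝ) • (α + θ α), (1/2 : ℝ) • (β + θ β)⟫ : ℝ)
      = (k : ℝ) * ⟪(1/2 : ℝ) • (β + θ β), (1/2 : ℝ) • (β + θ β)⟫ := by
  rcases tri hR0 hs hstab hcrys hθinv hθinner hθR hnoreal hβ with hc | hc | ⟨hc, hp⟩
  · obtain ⟨k, hk⟩ := hcrys α hα β hβ
    refine ⟨k, ?_⟩
    rw [inner_proj_pair hR0 hs hstab hcrys hθinv hθinner hθR hnoreal α β, inner_proj_pair hR0 hs hstab hcrys hθinv hθinner hθR hnoreal β β, hc]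
    linarith
  · obtain ⟨k1, hk1⟩ := hcrys α hα β hβ
    obtain ⟨k2, hk2⟩ := hcrys α hα (θ β) (hθR β hβ)
    rw [hθinner β β] at hk2
    refine ⟨k1 + k2, ?_⟩
    rw [inner_proj_pair hR0 hs hstab hcrys hθinv hθinner hθR hnoreal α β, inner_proj_pair hR0 hs hstab hcrys hθinv hθinner hθR hnoreal β β, hc]
    push_cast
    linarith
  · obtain ⟨m, hm⟩ := hcrys α hα (β + θ β) hp
    have hpp : (⟪β + θ β, β + θ β⟫ : ℝ) = ⟪β, β⟫ := by
      rw [inner_add_left, inner_add_right, inner_add_right, hθinner β β,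
        real_inner_comm β (θ β)]
      linarith
    rw [hpp, inner_add_right] at hm
    refine ⟨2 * m, ?_⟩
    rw [inner_proj_pair hR0 hs hstab hcrys hθinv hθinner hθR hnoreal α β, inner_proj_pair hR0 hs hstab hcrys hθinv hθinner hθR hnoreal β β, hc]
    push_cast
    linarith


end theta

section regvec
variable {E : Type} [NormedAddCommGroup E] [InnerProductSpace ℝ E] {θ : E ≃ₗ[ℝ] E}

lemma exists_reg (T : Finset E) (hT : ∀ x ∈ T, θ x = x ∧ x ≠ 0) :
    ∃ v : E, θ v = v ∧ ∀ x ∈ T, (⟪v, x⟫ : ℝ) ≠ 0 := by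
  classical
  induction T using Finset.induction_on with
  | empty => exact ⟨0, map_zero θ, fun x hx => absurd hx (Finset.notMem_empty x)⟩
  | @insert x T hxT ih =>
    obtain ⟨v, hv1, hv2⟩ := ih fun y hy => hT y (Finset.mem_insert_of_mem hy)
    obtain ⟨hθx, hx0⟩ := hT x (Finset.mem_insert_self x T)
    by_cases hvx : (⟪v, x⟫ : ℝ) ≠ 0
    · refine ⟨v, hv1, fun y hy => ?_⟩
      rcases Finset.mem_insert.mp hy with rfl | hyT
      · exact hvx
      · exact hv2 y hyT
    · push_neg at hvx
      obtain ⟨t, ht⟩ := Infinite.exists_notMem_finset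
        (insert (0:ℝ) (T.image fun y => -(⟪v, y⟫ : ℝ) / ⟪x, y⟫))
      have ht0 : t ≠ 0 := fun e => ht (by rw [e]; exact Finset.mem_insert_self 0 _)
      refine ⟨v + t • x, ?_, ?_⟩
      · rw [map_add, map_smul, hv1, hθx]
      · intro y hy
        rcases Finset.mem_insert.mp hy with rfl | hyT
        · rw [inner_add_left, real_inner_smul_left, hvx, zero_add]
          exact mul_ne_zero ht0 (ips hx0).ne'
        · rw [inner_add_left, real_inner_smul_left]
          by_cases hxy : (⟪x, y⟫ : ℝ) = 0
          · rw [hxy, mul_zero, add_zero]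
            exact hv2 y hyT
          · intro he
            apply ht
            apply Finset.mem_insert_of_mem
            refine Finset.mem_image.mpr ⟨y, hyT, ?_⟩
            field_simp
            linarith

end regvec
/-- Let `R` be a (crystallographic) root system in a Euclidean space, stable under the
reflections `s α`, and let `θ` be an involutive automorphism of the root system such
that no root restricts to zero on the `+1` eigenspace of `θ` (no real roots).  Then the
restricted roots (orthogonal projections `(α + θα)/2` to the `+1` eigenspace) form a
possibly non-reduced root system (nonzero, stable under their reflections, and with
integral Cartan pairings), and restriction to the `+1` eigenspace of `θ` gives an
injective homomorphism from `W^θ` to the Weyl group of the restricted system. -/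
theorem stmt16 {E : Type} [NormedAddCommGroup E] [InnerProductSpace ℝ E]
    (R : Finset E) (hR0 : (0 : E) ∉ R)
    (s : E → (E ≃ₗ[ℝ] E))
    (hs : ∀ α : E, α ≠ 0 → ∀ x : E, s α x = x - ((2 * inner ℝ x α / inner ℝ α α : ℝ)) • α)
    (hstab : ∀ α ∈ R, ∀ β ∈ R, s α β ∈ R)
    (hcrys : ∀ α ∈ R, ∀ β ∈ R, ∃ k : ℤ, 2 * (inner ℝ α β : ℝ) = (k : ℝ) * inner ℝ β β)
    (θ : E ≃ₗ[ℝ] E) (hθinv : ∀ x, θ (θ x) = x)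
    (hθinner : ∀ x y : E, (inner ℝ (θ x) (θ y) : ℝ) = inner ℝ x y)
    (hθR : ∀ α ∈ R, θ α ∈ R)
    (hnoreal : ∀ α ∈ R, θ α ≠ -α)
    (Rres : Set E) (hRres : Rres = {x : E | ∃ α ∈ R, x = (1 / 2 : ℝ) • (α + θ α)}) :
    (∀ x ∈ Rres, x ≠ 0) ∧
    (∀ x ∈ Rres, ∀ y ∈ Rres, s x y ∈ Rres) ∧
    (∀ x ∈ Rres, ∀ y ∈ Rres, ∃ k : ℤ, 2 * (inner ℝ x y : ℝ) = (k : ℝ) * inner ℝ y y) ∧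
    -- restriction of elements of `W^θ` lies in the restricted Weyl group:
    (∀ w ∈ Subgroup.closure {g : E ≃ₗ[ℝ] E | ∃ α ∈ R, g = s α},
      (∀ x, w (θ x) = θ (w x)) →
      ∃ w' ∈ Subgroup.closure {g : E ≃ₗ[ℝ] E | ∃ x ∈ Rres, g = s x},
        ∀ x, θ x = x → w x = w' x) ∧
    -- injectivity of the restriction homomorphism on `W^θ`:
    (∀ w ∈ Subgroup.closure {g : E ≃ₗ[ℝ] E | ∃ α ∈ R, g = s α},
      (∀ x, w (θ x) = θ (w x)) → (∀ x, θ x = x → w x = x) → w = 1) := by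
  classical
  set RF : Finset E := R.image (fun α => (1/2 : ℝ) • (α + θ α)) with hRF
  have hRresF : Rres = (↑RF : Set E) := by
    rw [hRres, hRF]
    ext x
    simp only [Set.mem_setOf_eq, Finset.coe_image, Set.mem_image, Finset.mem_coe]
    constructor
    · rintro ⟨α, hα, rfl⟩; exact ⟨α, hα, rfl⟩
    · rintro ⟨α, hα, rfl⟩; exact ⟨α, hα, rfl⟩
  have hRFfix : ∀ x ∈ RF, θ x = x := by
    intro x hx
    obtain ⟨α, hα, rfl⟩ := Finset.mem_image.mp hx
    exact proj_fixed hθinv hθinner α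
  have hRF0 : ∀ x ∈ RF, x ≠ 0 := by
    intro x hx
    obtain ⟨α, hα, rfl⟩ := Finset.mem_image.mp hx
    exact proj_ne0 hR0 hs hstab hcrys hθinv hθinner hθR hnoreal hα
  obtain ⟨v, hv1, hv2⟩ := exists_reg (θ := θ) RF (fun x hx => ⟨hRFfix x hx, hRF0 x hx⟩)
  have hvR : ∀ α ∈ R, (⟪v, α⟫ : ℝ) ≠ 0 := by
    intro α hα
    have h1 := hv2 _ (Finset.mem_image_of_mem (fun α => (1/2 : ℝ) • (α + θ α)) hα)
    rwa [fixed_inner hθinv hθinner hv1 α] at h1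
  have hRsys : RSys s R v := ⟨hR0, hs, hstab, hcrys, hvR⟩
  have hstabF : ∀ x ∈ RF, ∀ y ∈ RF, s x y ∈ RF := by
    intro x hx y hy
    obtain ⟨α, hα, rfl⟩ := Finset.mem_image.mp hx
    obtain ⟨β, hβ, rfl⟩ := Finset.mem_image.mp hy
    obtain ⟨γ, hγ, he⟩ := part2 hR0 hs hstab hcrys hθinv hθinner hθR hnoreal
      (fun g hg => hRsys.w_maps hg) hα hβ
    show s ((1/2 : ℝ) • (α + θ α)) ((1/2 : ℝ) • (β + θ β)) ∈ RF
    rw [he]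
    exact Finset.mem_image_of_mem _ hγ
  have hcrysF : ∀ x ∈ RF, ∀ y ∈ RF, ∃ k : ℤ, 2 * (⟪x, y⟫ : ℝ) = (k : ℝ) * ⟪y, y⟫ := by
    intro x hx y hy
    obtain ⟨α, hα, rfl⟩ := Finset.mem_image.mp hx
    obtain ⟨β, hβ, rfl⟩ := Finset.mem_image.mp hy
    exact part3 hR0 hs hstab hcrys hθinv hθinner hθR hnoreal hα hβ
  have hRF0' : (0 : E) ∉ RF := fun h0 => hRF0 0 h0 rfl
  have hRsysF : RSys s RF v := ⟨hRF0', hs, hstabF, hcrysF, fun x hx => hv2 x hx⟩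
  -- equivariant elements map RF to RF
  have hwproj : ∀ w : E ≃ₗ[ℝ] E, (∀ x, w (θ x) = θ (w x)) →
      ∀ α : E, w ((1/2 : ℝ) • (α + θ α)) = (1/2 : ℝ) • (w α + θ (w α)) := by
    intro w hw α
    rw [map_smul, map_add, hw α]
  have hwRF : ∀ w ∈ RW s R, (∀ x, w (θ x) = θ (w x)) → ∀ x ∈ RF, w x ∈ RF := by
    intro w hw hequiv x hx
    obtain ⟨α, hα, rfl⟩ := Finset.mem_image.mp hx
    rw [hwproj w hequiv α]
    exact Finset.mem_image_of_mem _ (hRsys.w_maps hw α hα)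
  -- chamber argument
  have hpreserve : ∀ w ∈ RW s R, (∀ x, w (θ x) = θ (w x)) →
      (∀ x ∈ RPos RF v, (0:ℝ) < ⟪v, w x⟫) → w = 1 := by
    intro w hw hequiv hposF
    apply hRsys.chamber hw
    intro β hβ
    have hβR := hRsys.mem_pos hβ
    have hprβpos : (1/2 : ℝ) • (β + θ β) ∈ RPos RF v := Finset.mem_filter.mpr
      ⟨Finset.mem_image_of_mem _ hβR, by
        rw [fixed_inner hθinv hθinner hv1 β]; exact hRsys.vpos hβ⟩
    have h1 : (0:ℝ) < ⟪v, w ((1/2 : ℝ) • (β + θ β))⟫ := hposF _ hprβpos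
    rw [hwproj w hequiv β, fixed_inner hθinv hθinner hv1 (w β)] at h1
    exact Finset.mem_filter.mpr ⟨hRsys.w_maps hw β hβR, h1⟩
  -- the generating sets agree
  have hgenEq : {g : E ≃ₗ[ℝ] E | ∃ x ∈ Rres, g = s x} = {g : E ≃ₗ[ℝ] E | ∃ x ∈ RF, g = s x} := by
    rw [hRresF]
    ext g
    simp only [Set.mem_setOf_eq, Finset.mem_coe]
  -- main induction for part 4
  have H4 : ∀ n : ℕ, ∀ w ∈ RW s R, (∀ x, w (θ x) = θ (w x)) →
      ((RPos RF v).filter fun x => (⟪v, w x⟫ : ℝ) < 0).card = n →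
      ∃ w' ∈ RW s RF, ∀ z, θ z = z → w z = w' z := by
    intro n
    induction n using Nat.strong_induction_on with
    | _ n ih =>
    intro w hw hequiv hcard
    by_cases hzero : n = 0
    · subst hzero
      have hempty := Finset.card_eq_zero.mp hcard
      have hpos : ∀ x ∈ RPos RF v, (0:ℝ) < ⟪v, w x⟫ := by
        intro x hx
        have hne : (⟪v, w x⟫ : ℝ) ≠ 0 := hv2 _ (hwRF w hw hequiv x (hRsysF.mem_pos hx))
        rcases lt_trichotomy (⟪v, w x⟫ : ℝ) 0 with hlt | heq | hgt
        · exfalso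
          have : x ∈ ((RPos RF v).filter fun x => (⟪v, w x⟫ : ℝ) < 0) :=
            Finset.mem_filter.mpr ⟨hx, hlt⟩
          rw [hempty] at this
          exact Finset.notMem_empty x this
        · exact absurd heq hne
        · exact hgt
      have hid := hpreserve w hw hequiv hpos
      exact ⟨1, one_mem _, fun z _ => by rw [hid]⟩
    · have hex : ∃ x ∈ RPos RF v, (⟪v, w x⟫ : ℝ) < 0 := by
        have hne : ((RPos RF v).filter fun x => (⟪v, w x⟫ : ℝ) < 0).Nonempty :=
          Finset.card_pos.mp (by omega)
        obtain ⟨x, hx⟩ := hne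
        exact ⟨x, (Finset.mem_filter.mp hx).1, (Finset.mem_filter.mp hx).2⟩
      have hδex : ∃ δ, RSimple RF v δ ∧ (⟪v, w δ⟫ : ℝ) < 0 := by
        by_contra hno
        push_neg at hno
        have hallpos : ∀ δ, RSimple RF v δ → (0:ℝ) < ⟪v, w δ⟫ := by
          intro δ hδ
          have hne : (⟪v, w δ⟫ : ℝ) ≠ 0 := hv2 _ (hwRF w hw hequiv δ (hRsysF.mem_pos hδ.1))
          rcases lt_trichotomy (⟪v, w δ⟫ : ℝ) 0 with hlt | heq | hgt
          · exact absurd hlt (not_lt.mpr (hno δ hδ))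
          · exact absurd heq hne
          · exact hgt
        obtain ⟨x, hx, hxneg⟩ := hex
        have := hRsysF.pos_of_simple_pos w hallpos hx
        linarith
      obtain ⟨δ, hδ, hδneg⟩ := hδex
      have hδRF := hRsysF.mem_pos hδ.1
      obtain ⟨γ, hγR, hγe⟩ := Finset.mem_image.mp hδRF
      obtain ⟨wg, hwgW, hwgeq, hwgfix⟩ := goodw hR0 hs hstab hcrys hθinv hθinner hθR hnoreal hγR
      have hw1W : w * wg ∈ RW s R := mul_mem hw hwgW
      have hw1eq : ∀ x, (w * wg) (θ x) = θ ((w * wg) x) := by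
        intro x
        show w (wg (θ x)) = θ (w (wg x))
        rw [hwgeq x, hequiv (wg x)]
      have hδfix : θ δ = δ := hRFfix δ hδRF
      have hδ0 : δ ≠ 0 := hRF0 δ hδRF
      have hsδ : ∀ z, θ z = z → wg z = s δ z := by
        intro z hz
        rw [hwgfix z hz, hγe]
      have hkey : ∀ x ∈ RF, (w * wg) x = w (s δ x) := by
        intro x hx
        show w (wg x) = _
        rw [hsδ x (hRFfix x hx)]
      have hvδ := hRsysF.vpos hδ.1
      have hcard1 : ((RPos RF v).filter fun x => (⟪v, (w * wg) x⟫ : ℝ) < 0).card < n := by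
        have hmaps : ∀ x ∈ ((RPos RF v).filter fun x => (⟪v, (w * wg) x⟫ : ℝ) < 0),
            s δ x ∈ (((RPos RF v).filter fun x => (⟪v, w x⟫ : ℝ) < 0).erase δ) := by
          intro x hx
          obtain ⟨hx1, hx2⟩ := Finset.mem_filter.mp hx
          rw [hkey x (hRsysF.mem_pos hx1)] at hx2
          have hnd : ∀ c : ℝ, x ≠ c • δ := by
            intro c hc
            have hvx := hRsysF.vpos hx1
            have hcpos : 0 < c := by
              rw [hc, real_inner_smul_right] at hvx
              nlinarith
            have hsδx : s δ x = -x := by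
              rw [hc, map_smul, s_apply_self hs hδ0, smul_neg]
            have hwneg : (⟪v, w x⟫ : ℝ) < 0 := by
              have hwc : w x = c • w δ := by rw [hc, map_smul]
              rw [hwc, real_inner_smul_right]
              exact mul_neg_of_pos_of_neg hcpos hδneg
            rw [hsδx, map_neg, inner_neg_right] at hx2
            linarith
          have hperm : s δ x ∈ RPos RF v := hRsysF.s_perm hδ hx1 hnd
          refine Finset.mem_erase.mpr ⟨?_, Finset.mem_filter.mpr ⟨hperm, hx2⟩⟩
          intro hceq
          have h4 : s δ (s δ x) = s δ δ := by rw [hceq]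
          rw [s_invol hs hδ0, s_apply_self hs hδ0] at h4
          exact hnd (-1) (by rw [h4]; module)
        have hinj : Set.InjOn (fun x => s δ x)
            ((RPos RF v).filter fun x => (⟪v, (w * wg) x⟫ : ℝ) < 0) := by
          intro a _ b _ hab
          have := congrArg (s δ) hab
          simpa [s_invol hs hδ0] using this
        calc ((RPos RF v).filter fun x => (⟪v, (w * wg) x⟫ : ℝ) < 0).card
            ≤ (((RPos RF v).filter fun x => (⟪v, w x⟫ : ℝ) < 0).erase δ).card :=
              Finset.card_le_card_of_injOn _ hmaps hinj
          _ < n := by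
              have hδmem : δ ∈ (RPos RF v).filter fun x => (⟪v, w x⟫ : ℝ) < 0 :=
                Finset.mem_filter.mpr ⟨hδ.1, hδneg⟩
              rw [Finset.card_erase_of_mem hδmem, hcard]
              have : 0 < n := by omega
              omega
      obtain ⟨w'', hw''W, hw''fix⟩ := ih _ hcard1 (w * wg) hw1W hw1eq rfl
      refine ⟨w'' * s δ, mul_mem hw''W (Subgroup.subset_closure ⟨δ, hδRF, rfl⟩), ?_⟩
      intro z hz
      have hsz : θ (s δ z) = s δ z := by
        rw [hs δ hδ0 z, map_sub, map_smul, hδfix, hz]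
      have h1 : (w * wg) (s δ z) = w'' (s δ z) := hw''fix _ hsz
      have h2 : (w * wg) (s δ z) = w z := by
        show w (wg (s δ z)) = w z
        rw [hsδ _ hsz, s_invol hs hδ0 z]
      show w z = w'' (s δ z)
      rw [← h2, h1]
  refine ⟨?_, ?_, ?_, ?_, ?_⟩
  · intro x hx
    rw [hRresF] at hx
    exact hRF0 x hx
  · intro x hx y hy
    rw [hRresF] at hx hy ⊢
    exact hstabF x hx y hy
  · intro x hx y hy
    rw [hRresF] at hx hy
    exact hcrysF x hx y hy
  · intro w hw hequiv
    obtain ⟨w', hw', he⟩ := H4 _ w hw hequiv rfl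
    refine ⟨w', ?_, he⟩
    rw [hgenEq]
    exact hw'
  · intro w hw hequiv hfix
    apply hpreserve w hw hequiv
    intro x hx
    rw [hfix x (hRFfix x (hRsysF.mem_pos hx))]
    exact hRsysF.vpos hx
end
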